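/- Let V be a 2n-dimensional real vector space with inner product g and compatible complex structures I₊, I₋, and let P± := ½(1 - iI±) be the projections of V_ℂ onto the +i eigenspaces T±^{1,0}. Define σ₊ := Q - i I₊ Q : V*_ℂ → V_ℂ where Q = -½[I₊,I₋]g⁻¹. Then σ₊ = 4 g⁻¹ P̄₊ P̄₋ P₊, where P̄± = ½(1 + iI±) and I± acts on V* by the dual maps. -/

import Mathlib

open TensorProduct

section

variable {V : Type*} [AddCommGroup V] [Module ℝ V]

/-- The projection `P = ½(1 - i I*)` on the complexified dual space, applied to a vector. -/
noncomputable def Pproj (I : Module.End ℝ V) (ξ : ℂ ⊗[ℝ] Module.Dual ℝ V) :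
    ℂ ⊗[ℝ] Module.Dual ℝ V :=
  (1/2 : ℂ) • (ξ - Complex.I • ((I.dualMap).baseChange ℂ ξ))

/-- The projection `P̄ = ½(1 + i I*)` on the complexified dual space, applied to a vector. -/
noncomputable def Pbarproj (I : Module.End ℝ V) (ξ : ℂ ⊗[ℝ] Module.Dual ℝ V) :
    ℂ ⊗[ℝ] Module.Dual ℝ V :=
  (1/2 : ℂ) • (ξ + Complex.I • ((I.dualMap).baseChange ℂ ξ))

end

theorem sigma_plus_factorization
    (V : Type*) [AddCommGroup V] [Module ℝ V] [FiniteDimensional ℝ V]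
    (g : V →ₗ[ℝ] Module.Dual ℝ V) (ginv : Module.Dual ℝ V →ₗ[ℝ] V)
    (hgsym : ∀ X Y, g X Y = g Y X)
    (hgpos : ∀ X, X ≠ 0 → 0 < g X X)
    (hg₁ : g ∘ₗ ginv = LinearMap.id) (hg₂ : ginv ∘ₗ g = LinearMap.id)
    (Ip Im : Module.End ℝ V) (hIp : Ip ^ 2 = -1) (hIm : Im ^ 2 = -1)
    (hcp : ∀ X Y, g (Ip X) (Ip Y) = g X Y)
    (hcm : ∀ X Y, g (Im X) (Im Y) = g X Y)
    (Q : Module.Dual ℝ V →ₗ[ℝ] V)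
    (hQ : Q = (-(1/2 : ℝ)) • ((Ip * Im - Im * Ip) ∘ₗ ginv)) :
    ∀ ξ : ℂ ⊗[ℝ] Module.Dual ℝ V,
      Q.baseChange ℂ ξ - Complex.I • (Ip.baseChange ℂ (Q.baseChange ℂ ξ))
        = (4 : ℂ) • (ginv.baseChange ℂ (Pbarproj Ip (Pbarproj Im (Pproj Ip ξ)))) := by
  have hAg : ∀ (I : Module.End ℝ V), (∀ X Y, g (I X) (I Y) = g X Y) → I ^ 2 = -1 →
      ginv ∘ₗ I.dualMap = -(I ∘ₗ ginv) := by
    intro I hc hI2'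
    have hI2 : ∀ X, I (I X) = -X := by
      intro X
      have := DFunLike.congr_fun hI2' X
      simpa [pow_two, Module.End.mul_apply] using this
    have key : ∀ X, I.dualMap (g X) = -(g (I X)) := by
      intro X
      ext Y
      have h1 := hc (I X) Y
      rw [hI2 X] at h1
      simp only [map_neg, LinearMap.neg_apply] at h1
      have : g X (I Y) = -(g (I X) Y) := by linarith
      simpa [LinearMap.dualMap_apply] using this
    ext φ
    have hφ : g (ginv φ) = φ := by
      have := DFunLike.congr_fun hg₁ φ; simpa using this
    have h2 : ∀ X, ginv (g X) = X := by
      intro X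
      have := DFunLike.congr_fun hg₂ X; simpa using this
    calc (ginv ∘ₗ I.dualMap) φ = ginv (I.dualMap (g (ginv φ))) := by rw [hφ]; rfl
      _ = ginv (-(g (I (ginv φ)))) := by rw [key]
      _ = -(I (ginv φ)) := by rw [map_neg, h2]
      _ = (-(I ∘ₗ ginv)) φ := rfl
  have hA := hAg Ip hcp hIp
  have hB := hAg Im hcm hIm
  have hAc : ∀ ξ : ℂ ⊗[ℝ] Module.Dual ℝ V,
      ginv.baseChange ℂ ((Ip.dualMap).baseChange ℂ ξ)
        = -(Ip.baseChange ℂ (ginv.baseChange ℂ ξ)) := by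
    intro ξ
    have := congrArg (fun L : Module.Dual ℝ V →ₗ[ℝ] V => L.baseChange ℂ ξ) hA
    simpa [LinearMap.baseChange_comp, LinearMap.baseChange_neg] using this
  have hBc : ∀ ξ : ℂ ⊗[ℝ] Module.Dual ℝ V,
      ginv.baseChange ℂ ((Im.dualMap).baseChange ℂ ξ)
        = -(Im.baseChange ℂ (ginv.baseChange ℂ ξ)) := by
    intro ξ
    have := congrArg (fun L : Module.Dual ℝ V →ₗ[ℝ] V => L.baseChange ℂ ξ) hB
    simpa [LinearMap.baseChange_comp, LinearMap.baseChange_neg] using this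
  have hIp2 : ∀ y : ℂ ⊗[ℝ] V, Ip.baseChange ℂ (Ip.baseChange ℂ y) = -y := by
    intro y
    have := congrArg (fun L : Module.End ℝ V => L.baseChange ℂ y) hIp
    simpa [pow_two, LinearMap.baseChange_mul, LinearMap.baseChange_neg,
      LinearMap.baseChange_one, Module.End.mul_apply] using this
  have hsm : ∀ x : ℂ ⊗[ℝ] V, (-(1/2 : ℝ)) • x = (-(1/2 : ℂ)) • x := by
    intro x
    rw [show ((-(1/2 : ℂ))) = algebraMap ℝ ℂ (-(1/2 : ℝ)) by norm_num, algebraMap_smul]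
  intro ξ
  subst hQ
  simp only [Pproj, Pbarproj, LinearMap.baseChange_smul, LinearMap.baseChange_comp,
    LinearMap.baseChange_sub, LinearMap.baseChange_mul, LinearMap.smul_apply,
    LinearMap.sub_apply, Module.End.mul_apply, LinearMap.comp_apply,
    map_smul, LinearMap.map_smul_of_tower, map_add, map_sub, map_neg, hAc, hBc, hIp2,
    smul_neg, neg_neg, hsm, smul_add, smul_sub, smul_smul]
  have hI3 : Complex.I ^ 3 = -Complex.I := by rw [pow_succ, Complex.I_sq]; ring
  match_scalars
  all_goals (try ring) <;> (simp only [hI3, Complex.I_sq]; ring)
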